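/- Let X = (X_1, ..., X_k) be an ℝ^k-valued random variable. For each i define φ^(i) = sup over (x_1,...,x_k) ∈ ℝ^k of the essential supremum of |E(∏_{j≠i}(1_{X_j>x_j} − P(X_j>x_j)) | σ(X_i)) − E(∏_{j≠i}(1_{X_j>x_j} − P(X_j>x_j)))|. Then for any (x_1,...,x_k), |E(∏_{i=1}^k (1_{X_i>x_i} − P(X_i>x_i)))| ≤ φ^(i) · min(P(X_i ≤ x_i), P(X_i > x_i)). -/

import Mathlib

open MeasureTheory

theorem indicator_product_mixing_bound
    {Ω : Type*} [m0 : MeasurableSpace Ω] (μ : Measure Ω) [IsProbabilityMeasure μ]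
    (k : ℕ) (X : Fin k → Ω → ℝ)
    (hmeas : ∀ i, Measurable (X i))
    (φ : Fin k → ℝ)
    (hφ : ∀ i : Fin k, ∀ x : Fin k → ℝ,
      ∀ᵐ ω ∂μ,
        |(μ[(fun ω' => ∏ j ∈ Finset.univ.erase i,
              ((if x j < X j ω' then (1 : ℝ) else 0) - (μ {ω'' | x j < X j ω''}).toReal)) |
            MeasurableSpace.comap (X i) inferInstance]) ω
          - ∫ ω', ∏ j ∈ Finset.univ.erase i,
              ((if x j < X j ω' then (1 : ℝ) else 0) - (μ {ω'' | x j < X j ω''}).toReal) ∂μ|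
          ≤ φ i) :
    ∀ (x : Fin k → ℝ) (i : Fin k),
      |∫ ω, ∏ j, ((if x j < X j ω then (1 : ℝ) else 0) - (μ {ω' | x j < X j ω'}).toReal) ∂μ|
        ≤ φ i * min (μ {ω | X i ω ≤ x i}).toReal (μ {ω | x i < X i ω}).toReal := by
  intro x i
  -- notation
  have hm : MeasurableSpace.comap (X i) inferInstance ≤ m0 := (hmeas i).comap_le
  set p : Fin k → ℝ := fun j => (μ {ω' | x j < X j ω'}).toReal with hp_def
  set F : Fin k → Ω → ℝ := fun j ω => (if x j < X j ω then (1 : ℝ) else 0) - p j with hF_def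
  set g : Ω → ℝ := fun ω => ∏ j ∈ Finset.univ.erase i, F j ω with hg_def
  set A : Set Ω := {ω | x i < X i ω} with hA_def
  -- basic measurability
  have hsetmeas : ∀ j : Fin k, MeasurableSet[m0] {ω | x j < X j ω} := fun j =>
    (hmeas j) measurableSet_Ioi
  have hp_mem : ∀ j, 0 ≤ p j ∧ p j ≤ 1 := by
    intro j
    refine ⟨ENNReal.toReal_nonneg, ?_⟩
    have := prob_le_one (μ := μ) (s := {ω' | x j < X j ω'})
    simpa using ENNReal.toReal_mono ENNReal.one_ne_top this
  have hF_bd : ∀ j ω, |F j ω| ≤ 1 := by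
    intro j ω
    have h := hp_mem j
    simp only [hF_def]
    split_ifs <;> rw [abs_le] <;> constructor <;> linarith [h.1, h.2]
  have hF_meas : ∀ j, Measurable[m0] (F j) := fun j =>
    (Measurable.ite (hsetmeas j) measurable_const measurable_const).sub measurable_const
  have hg_meas : Measurable[m0] g := by
    apply Finset.measurable_prod
    intro j _
    exact hF_meas j
  have hg_bd : ∀ ω, |g ω| ≤ 1 := by
    intro ω
    calc |g ω| = ∏ j ∈ Finset.univ.erase i, |F j ω| := by
          simp [hg_def, Finset.abs_prod]
      _ ≤ ∏ j ∈ Finset.univ.erase i, (1 : ℝ) := by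
          apply Finset.prod_le_prod
          · intro j _; exact abs_nonneg _
          · intro j _; exact hF_bd j ω
      _ = 1 := by simp
  have hg_int : Integrable g μ :=
    ⟨hg_meas.aestronglyMeasurable,
      HasFiniteIntegral.of_bounded (C := 1) (ae_of_all _ fun ω => by
        simpa [Real.norm_eq_abs] using hg_bd ω)⟩
  have hA_meas : MeasurableSet[m0] A := hsetmeas i
  have hA_m : MeasurableSet[MeasurableSpace.comap (X i) inferInstance] A := ⟨Set.Ioi (x i), measurableSet_Ioi, rfl⟩
  -- φ i is nonneg
  have hφi : 0 ≤ φ i := by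
    have h := hφ i x
    rcases h.exists with ⟨ω, hω⟩
    exact le_trans (abs_nonneg _) hω
  -- the conditional expectation and centered version
  set c : ℝ := ∫ ω, g ω ∂μ with hc_def
  set h : Ω → ℝ := fun ω => (μ[g | MeasurableSpace.comap (X i) inferInstance]) ω - c with hh_def
  have hh_int : Integrable h μ := (integrable_condExp).sub (integrable_const c)
  have hh_bd : ∀ᵐ ω ∂μ, |h ω| ≤ φ i := hφ i x
  -- product splits
  have hsplit : ∀ ω, (∏ j, F j ω) = F i ω * g ω := by
    intro ω
    exact (Finset.mul_prod_erase Finset.univ (fun j => F j ω) (Finset.mem_univ i)).symm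
  -- indicator rewriting: F i ω * g ω = A.indicator g ω - p i * g ω
  have hFi : ∀ ω, F i ω * g ω = A.indicator g ω - p i * g ω := by
    intro ω
    simp only [hF_def, hA_def, Set.indicator]
    by_cases hω : x i < X i ω <;> simp [hω, sub_mul]
  have hind_int : Integrable (A.indicator g) μ := hg_int.indicator hA_meas
  have hμA : (μ A).toReal = p i := rfl
  -- main computation of the integral
  have hmain : ∫ ω, (∏ j, F j ω) ∂μ = ∫ ω in A, h ω ∂μ := by
    have h1 : ∫ ω, (∏ j, F j ω) ∂μ = (∫ ω in A, g ω ∂μ) - p i * c := by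
      simp_rw [hsplit, hFi]
      rw [integral_sub hind_int (hg_int.const_mul _), integral_indicator hA_meas,
        integral_const_mul]
    have h2 : ∫ ω in A, g ω ∂μ = ∫ ω in A, (μ[g | MeasurableSpace.comap (X i) inferInstance]) ω ∂μ :=
      (setIntegral_condExp hm hg_int hA_m).symm
    have h3 : ∫ ω in A, h ω ∂μ = (∫ ω in A, (μ[g | MeasurableSpace.comap (X i) inferInstance]) ω ∂μ) - c * (μ A).toReal := by
      simp only [hh_def]
      rw [integral_sub (integrable_condExp.integrableOn) (integrableOn_const (C := c) (measure_lt_top _ _).ne)]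
      simp [Measure.restrict_apply_univ, Measure.real]
      ring
    rw [h1, h2, h3, hμA]
    ring
  -- also equals minus the integral over the complement
  have hcompl : ∫ ω in A, h ω ∂μ = -∫ ω in Aᶜ, h ω ∂μ := by
    have htot : (∫ ω in A, h ω ∂μ) + ∫ ω in Aᶜ, h ω ∂μ = ∫ ω, h ω ∂μ :=
      integral_add_compl hA_meas hh_int
    have hzero : ∫ ω, h ω ∂μ = 0 := by
      simp only [hh_def]
      rw [integral_sub integrable_condExp (integrable_const c), integral_condExp hm]
      simp [hc_def]
    linarith [htot, hzero]
  -- bounds on both pieces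
  have hboundA : |∫ ω in A, h ω ∂μ| ≤ φ i * (μ A).toReal := by
    have := norm_setIntegral_le_of_norm_le_const_ae (μ := μ) (s := A) (f := h)
      (C := φ i) (measure_lt_top _ _) (ae_restrict_of_ae (hh_bd.mono fun ω hω => by
        simpa [Real.norm_eq_abs] using hω))
    simpa [Real.norm_eq_abs, Measure.real] using this
  have hboundAc : |∫ ω in A, h ω ∂μ| ≤ φ i * (μ Aᶜ).toReal := by
    rw [hcompl, abs_neg]
    have := norm_setIntegral_le_of_norm_le_const_ae (μ := μ) (s := Aᶜ) (f := h)
      (C := φ i) (measure_lt_top _ _) (ae_restrict_of_ae (hh_bd.mono fun ω hω => by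
        simpa [Real.norm_eq_abs] using hω))
    simpa [Real.norm_eq_abs, Measure.real] using this
  have hAc : Aᶜ = {ω | X i ω ≤ x i} := by
    ext ω; simp [hA_def, not_lt]
  rw [mul_min_of_nonneg _ _ hφi]
  have hgoal : |∫ ω, (∏ j, F j ω) ∂μ|
      ≤ min (φ i * (μ {ω | X i ω ≤ x i}).toReal) (φ i * (μ {ω | x i < X i ω}).toReal) := by
    rw [hmain]
    refine le_min ?_ ?_
    · rw [← hAc]; exact hboundAc
    · rw [← hA_def]; exact hboundA
  exact hgoal
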